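/- Suppose f : [0,1] → ℝ is continuous and admits a jointly continuous local time η, i.e. η : [0,1] × ℝ → [0,∞) is continuous, for each t the occupation measure of f on [0,t] has density η(t,·) with respect to Lebesgue measure, and η(t,y) vanishes for |y| large. Then 2·∫₀¹ [η(1, f(t)) − η(t, f(t))] dt = ∫_ℝ η(1, y)² dy. -/

import Mathlib

open Set MeasureTheory intervalIntegral

/-- If `f` is continuous on `[0,1]` with a jointly continuous local time `η`
(occupation density) vanishing for `|y|` large, then
`2·∫₀¹ (η(1, f(t)) − η(t, f(t))) dt = ∫_ℝ η(1,y)² dy`. -/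
theorem occupation_density_square_identity (f : ℝ → ℝ) (η : ℝ → ℝ → ℝ)
    (hf : ContinuousOn f (Icc 0 1))
    (hη : ContinuousOn (fun p : ℝ × ℝ => η p.1 p.2) (Icc 0 1 ×ˢ univ))
    (hηnonneg : ∀ t ∈ Icc (0:ℝ) 1, ∀ y : ℝ, 0 ≤ η t y)
    (hocc : ∀ φ : BoundedContinuousFunction ℝ ℝ, ∀ t ∈ Icc (0:ℝ) 1,
      ∫ u in (0:ℝ)..t, φ (f u) = ∫ y : ℝ, φ y * η t y)
    (hsupp : ∃ C : ℝ, ∀ t ∈ Icc (0:ℝ) 1, ∀ y : ℝ, C ≤ |y| → η t y = 0) :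
    2 * ∫ t in (0:ℝ)..1, (η 1 (f t) - η t (f t)) = ∫ y : ℝ, (η 1 y) ^ 2 := by
  classical
  obtain ⟨C₀, hC₀⟩ := hsupp
  set C : ℝ := max C₀ 1 with hCdef
  have hC1 : (1:ℝ) ≤ C := le_max_right _ _
  have hCpos : (0:ℝ) < C := lt_of_lt_of_le one_pos hC1
  have hCsupp : ∀ t ∈ Icc (0:ℝ) 1, ∀ y : ℝ, C ≤ |y| → η t y = 0 :=
    fun t ht y hy => hC₀ t ht y (le_trans (le_max_left _ _) hy)
  have habs : ∀ y : ℝ, y ∉ Icc (-C) C → C ≤ |y| := by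
    intro y hy
    rw [mem_Icc, not_and_or, not_le, not_le] at hy
    rcases hy with h | h
    · rw [abs_of_neg (by linarith)]; linarith
    · rw [abs_of_pos (by linarith)]; linarith
  -- compact support helper
  have hCSfun : ∀ g : ℝ → ℝ, (∀ y : ℝ, C ≤ |y| → g y = 0) → HasCompactSupport g := by
    intro g hg
    exact HasCompactSupport.intro (isCompact_Icc (a := -C) (b := C))
      (fun y hy => hg y (habs y hy))
  -- continuity of slices
  have hslice : ∀ t ∈ Icc (0:ℝ) 1, Continuous (η t) := by
    intro t ht
    rw [← continuousOn_univ]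
    exact hη.comp ((continuous_const.prodMk continuous_id).continuousOn)
      (fun y _ => ⟨ht, mem_univ y⟩)
  have hCS : ∀ t ∈ Icc (0:ℝ) 1, HasCompactSupport (η t) :=
    fun t ht => hCSfun (η t) (hCsupp t ht)
  have hInt : ∀ t ∈ Icc (0:ℝ) 1, Integrable (η t) :=
    fun t ht => (hslice t ht).integrable_of_hasCompactSupport (hCS t ht)
  have hIntMul : ∀ s ∈ Icc (0:ℝ) 1, ∀ t ∈ Icc (0:ℝ) 1,
      Integrable (fun y => η s y * η t y) := by
    intro s hs t ht
    exact ((hslice s hs).mul (hslice t ht)).integrable_of_hasCompactSupport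
      (hCSfun _ (fun y hy => by simp only [Pi.mul_apply]; rw [hCsupp s hs y hy, zero_mul]))
  -- occupation identity for compactly supported continuous functions
  have hoccC : ∀ φ : ℝ → ℝ, Continuous φ → HasCompactSupport φ →
      ∀ t ∈ Icc (0:ℝ) 1, ∫ u in (0:ℝ)..t, φ (f u) = ∫ y : ℝ, φ y * η t y := by
    intro φ hφc hφs t ht
    obtain ⟨M, hM⟩ := hφs.exists_bound_of_continuous hφc
    exact hocc (BoundedContinuousFunction.ofNormedAddCommGroup φ hφc M hM) t ht
  -- interval integrability of slice compositions
  have hIIcomp : ∀ (φ : ℝ → ℝ), Continuous φ → ∀ a ∈ Icc (0:ℝ) 1, ∀ b ∈ Icc (0:ℝ) 1,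
      IntervalIntegrable (fun u => φ (f u)) volume a b := by
    intro φ hφ a ha b hb
    exact (hφ.comp_continuousOn (hf.mono (uIcc_subset_Icc ha hb))).intervalIntegrable
  have h01 : (0:ℝ) ∈ Icc (0:ℝ) 1 := ⟨le_refl 0, zero_le_one⟩
  have h11 : (1:ℝ) ∈ Icc (0:ℝ) 1 := ⟨zero_le_one, le_refl 1⟩
  have hmono : ∀ s ∈ Icc (0:ℝ) 1, ∀ t ∈ Icc (0:ℝ) 1, s ≤ t → ∀ y : ℝ, η s y ≤ η t y := by
    intro s hs t ht hst y₀
    by_contra hlt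
    push_neg at hlt
    set ψ : ℝ → ℝ := fun y => η s y - η t y with hψdef
    have hψc : Continuous ψ := (hslice s hs).sub (hslice t ht)
    have hψ0 : 0 < ψ y₀ := sub_pos.mpr hlt
    have hopen : IsOpen {y : ℝ | ψ y₀ / 2 < ψ y} := isOpen_lt continuous_const hψc
    obtain ⟨δ, δpos, hball⟩ := Metric.isOpen_iff.mp hopen y₀ (by simpa using half_lt_self hψ0)
    set φ : ℝ → ℝ := fun y => max 0 (δ - |y - y₀|) with hφdef
    have hφc : Continuous φ := by fun_prop
    have hφnn : ∀ y, 0 ≤ φ y := fun y => le_max_left _ _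
    have hφzero : ∀ y : ℝ, y ∉ Metric.ball y₀ δ → φ y = 0 := by
      intro y hy
      rw [Metric.mem_ball, Real.dist_eq, not_lt] at hy
      simp only [hφdef]
      rw [max_eq_left (by linarith)]
    have hφCS : HasCompactSupport φ :=
      HasCompactSupport.intro (isCompact_closedBall y₀ δ)
        (fun y hy => hφzero y (fun h => hy (Metric.ball_subset_closedBall h)))
    have hφint : Integrable φ := hφc.integrable_of_hasCompactSupport hφCS
    have hψφint : Integrable (fun y => φ y * ψ y) :=
      (hφc.mul hψc).integrable_of_hasCompactSupport (hφCS.mul_right)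
    have hkey : ∀ y, φ y * (ψ y₀ / 2) ≤ φ y * ψ y := by
      intro y
      by_cases hy : y ∈ Metric.ball y₀ δ
      · exact mul_le_mul_of_nonneg_left (le_of_lt (hball hy)) (hφnn y)
      · rw [hφzero y hy]; simp
    have hφpos : 0 < ∫ y, φ y := by
      rw [MeasureTheory.integral_pos_iff_support_of_nonneg_ae
        (Filter.Eventually.of_forall hφnn) hφint]
      refine lt_of_lt_of_le (Metric.measure_ball_pos volume y₀ δpos) (measure_mono ?_)
      intro y hy
      rw [Metric.mem_ball, Real.dist_eq] at hy
      rw [Function.mem_support, hφdef]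
      simp only
      rw [max_eq_right (by linarith)]
      intro h; linarith [abs_nonneg (y - y₀)]
    have hlow : 0 < ∫ y, φ y * ψ y := by
      refine lt_of_lt_of_le ?_ (integral_mono (hφint.mul_const _) hψφint hkey)
      rw [MeasureTheory.integral_mul_const]
      positivity
    have hocc_s := hoccC φ hφc hφCS s hs
    have hocc_t := hoccC φ hφc hφCS t ht
    have hIIs := hIIcomp φ hφc 0 ⟨le_refl 0, zero_le_one⟩ s hs
    have hIIt := hIIcomp φ hφc 0 ⟨le_refl 0, zero_le_one⟩ t ht
    have heq : ∫ y, φ y * ψ y = -∫ u in s..t, φ (f u) := by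
      have h1 : ∫ y, φ y * ψ y = (∫ y, φ y * η s y) - ∫ y, φ y * η t y := by
        rw [← MeasureTheory.integral_sub (f := fun y => φ y * η s y) (g := fun y => φ y * η t y)
          ((hφc.mul (hslice s hs)).integrable_of_hasCompactSupport hφCS.mul_right)
          ((hφc.mul (hslice t ht)).integrable_of_hasCompactSupport hφCS.mul_right)]
        congr 1; funext y; simp only [hψdef]; ring
      rw [h1, ← hocc_s, ← hocc_t, ← neg_sub,
        intervalIntegral.integral_interval_sub_left hIIt hIIs]
    have hnn : 0 ≤ ∫ u in s..t, φ (f u) :=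
      intervalIntegral.integral_nonneg hst (fun u _ => hφnn _)
    linarith
  have hclaimA : ∀ n : ℕ, 1 ≤ n → (∫ y : ℝ, (η 1 y)^2) =
      2 * (∑ j ∈ Finset.range n, ∫ u in ((j:ℝ)/(n:ℝ))..(((j:ℝ)+1)/(n:ℝ)), η ((j:ℝ)/(n:ℝ)) (f u))
      + ∑ j ∈ Finset.range n, ∫ y : ℝ, (η (((j:ℝ)+1)/(n:ℝ)) y - η ((j:ℝ)/(n:ℝ)) y)^2 := by
    have h01 : (0:ℝ) ∈ Icc (0:ℝ) 1 := ⟨le_refl 0, zero_le_one⟩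
    intro n hn
    have hn0 : (0:ℝ) < (n:ℝ) := by exact_mod_cast hn
    have hgrid : ∀ j : ℕ, j ≤ n → ((j:ℝ)/(n:ℝ)) ∈ Icc (0:ℝ) 1 := by
      intro j hj
      constructor
      · positivity
      · rw [div_le_one hn0]; exact_mod_cast hj
    have hsqint : ∀ t ∈ Icc (0:ℝ) 1, Integrable (fun y => (η t y)^2) := by
      intro t ht
      have := hIntMul t ht t ht
      simpa [pow_two] using this
    set g : ℕ → ℝ := fun j => ∫ y : ℝ, (η ((j:ℝ)/(n:ℝ)) y)^2 with hgdef
    have key : ∀ j ∈ Finset.range n,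
        g (j+1) - g j = (∫ y : ℝ, (η (((j:ℝ)+1)/(n:ℝ)) y - η ((j:ℝ)/(n:ℝ)) y)^2)
          + 2 * ∫ u in ((j:ℝ)/(n:ℝ))..(((j:ℝ)+1)/(n:ℝ)), η ((j:ℝ)/(n:ℝ)) (f u) := by
      intro j hj
      rw [Finset.mem_range] at hj
      set a : ℝ := (j:ℝ)/(n:ℝ) with hadef
      set b : ℝ := ((j:ℝ)+1)/(n:ℝ) with hbdef
      have ha : a ∈ Icc (0:ℝ) 1 := hgrid j (le_of_lt hj)
      have hb : b ∈ Icc (0:ℝ) 1 := by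
        have : ((j:ℝ)+1) = ((j+1:ℕ):ℝ) := by push_cast; ring
        rw [hbdef, this]
        exact hgrid (j+1) hj
      have hcast : ((j:ℕ)+1 : ℕ) = j+1 := rfl
      have hgj1 : g (j+1) = ∫ y : ℝ, (η b y)^2 := by
        simp only [hgdef, hbdef]; norm_num
      have hgj : g j = ∫ y : ℝ, (η a y)^2 := rfl
      have hd2int : Integrable (fun y => (η b y - η a y)^2) := by
        refine Continuous.integrable_of_hasCompactSupport
          (((hslice b hb).sub (hslice a ha)).pow 2) (hCSfun _ ?_)
        intro y hy
        rw [hCsupp b hb y hy, hCsupp a ha y hy]; ring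
      have hmulint_ab := hIntMul a ha b hb
      have hmulint_aa := hIntMul a ha a ha
      have hocc_b := hoccC (η a) (hslice a ha) (hCSfun _ (hCsupp a ha)) b hb
      have hocc_a := hoccC (η a) (hslice a ha) (hCSfun _ (hCsupp a ha)) a ha
      have hstep : ∫ u in a..b, η a (f u) =
          (∫ y : ℝ, η a y * η b y) - ∫ y : ℝ, η a y * η a y := by
        rw [← hocc_b, ← hocc_a,
          intervalIntegral.integral_interval_sub_left
            (hIIcomp (η a) (hslice a ha) 0 h01 b hb)
            (hIIcomp (η a) (hslice a ha) 0 h01 a ha)]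
      rw [hgj1, hgj, ← MeasureTheory.integral_sub (hsqint b hb) (hsqint a ha)]
      have : (fun y => (η b y)^2 - (η a y)^2) =
          fun y => (η b y - η a y)^2 + ((2:ℝ) * (η a y * η b y) - 2 * (η a y * η a y)) := by
        funext y; ring
      have hint1 : Integrable (fun y => (2:ℝ) * (η a y * η b y)) volume := hmulint_ab.const_mul 2
      have hint2 : Integrable (fun y => (2:ℝ) * (η a y * η a y)) volume := hmulint_aa.const_mul 2
      have hint3 : Integrable (fun y => (2:ℝ) * (η a y * η b y) - 2 * (η a y * η a y)) volume :=
        hint1.sub hint2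
      rw [this, MeasureTheory.integral_add hd2int hint3,
        MeasureTheory.integral_sub hint1 hint2,
        MeasureTheory.integral_const_mul, MeasureTheory.integral_const_mul, hstep]
      ring
    have tel : ∑ j ∈ Finset.range n, (g (j+1) - g j) = g n - g 0 := Finset.sum_range_sub g n
    have hg0 : g 0 = 0 := by
      have h00 := hoccC (η 0) (hslice 0 h01) (hCSfun _ (hCsupp 0 h01)) 0 h01
      rw [intervalIntegral.integral_same] at h00
      calc g 0 = ∫ y : ℝ, η 0 y * η 0 y := by
            simp only [hgdef, Nat.cast_zero, zero_div, pow_two]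
        _ = 0 := h00.symm
    have hgn : g n = ∫ y : ℝ, (η 1 y)^2 := by
      simp only [hgdef, div_self hn0.ne']
    rw [Finset.sum_congr rfl key] at tel
    rw [Finset.sum_add_distrib] at tel
    rw [← Finset.mul_sum] at tel
    rw [hg0, hgn, sub_zero] at tel
    linarith [tel]
  have hclaimB : Filter.Tendsto (fun n : ℕ => ∑ j ∈ Finset.range n,
        ∫ u in ((j:ℝ)/(n:ℝ))..(((j:ℝ)+1)/(n:ℝ)), η ((j:ℝ)/(n:ℝ)) (f u))
      Filter.atTop (nhds (∫ t in (0:ℝ)..1, η t (f t))) := by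
    obtain ⟨Mf, hMf⟩ := isCompact_Icc.exists_bound_of_continuousOn hf
    set M : ℝ := max Mf C with hMdef
    have hK : IsCompact ((Icc (0:ℝ) 1) ×ˢ (Icc (-M) M)) := isCompact_Icc.prod isCompact_Icc
    have hUC := hK.uniformContinuousOn_of_continuous
      (hη.mono (fun p hp => ⟨hp.1, mem_univ _⟩))
    have hfM : ∀ u ∈ Icc (0:ℝ) 1, f u ∈ Icc (-M) M := by
      intro u hu
      have := hMf u hu
      rw [Real.norm_eq_abs, abs_le] at this
      constructor
      · linarith [this.1, le_max_left Mf C]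
      · linarith [this.2, le_max_left Mf C]
    have hFc : ContinuousOn (fun u => η u (f u)) (Icc (0:ℝ) 1) :=
      hη.comp (f := fun u => (u, f u)) (s := Icc (0:ℝ) 1) (continuousOn_id.prodMk hf) (fun u hu => ⟨hu, mem_univ _⟩)
    have hFint : ∀ a ∈ Icc (0:ℝ) 1, ∀ b ∈ Icc (0:ℝ) 1,
        IntervalIntegrable (fun u => η u (f u)) volume a b :=
      fun a ha b hb => (hFc.mono (uIcc_subset_Icc ha hb)).intervalIntegrable
    rw [Metric.tendsto_atTop]
    intro ε hε
    obtain ⟨δ, hδpos, hδ⟩ := Metric.uniformContinuousOn_iff.mp hUC (ε/2) (half_pos hε)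
    obtain ⟨N, hN⟩ := exists_nat_gt (1/δ)
    refine ⟨max N 1, fun n hn => ?_⟩
    have hn1 : 1 ≤ n := le_trans (le_max_right N 1) hn
    have hn0 : (0:ℝ) < (n:ℝ) := by exact_mod_cast hn1
    have hNn : (1:ℝ)/δ < (n:ℝ) :=
      lt_of_lt_of_le hN (by exact_mod_cast le_trans (le_max_left N 1) hn)
    have hinvn : (1:ℝ)/(n:ℝ) < δ := by
      rw [div_lt_iff₀ hn0]
      rw [div_lt_iff₀ hδpos] at hNn
      linarith [mul_comm δ (n:ℝ)]
    have hgrid : ∀ j : ℕ, j ≤ n → ((j:ℝ)/(n:ℝ)) ∈ Icc (0:ℝ) 1 := by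
      intro j hj
      exact ⟨by positivity, by rw [div_le_one hn0]; exact_mod_cast hj⟩
    have hsum_eq : ∑ j ∈ Finset.range n, (∫ u in ((j:ℝ)/(n:ℝ))..(((j:ℝ)+1)/(n:ℝ)), η u (f u))
        = ∫ t in (0:ℝ)..1, η t (f t) := by
      have h := intervalIntegral.sum_integral_adjacent_intervals
        (a := fun k : ℕ => (k:ℝ)/(n:ℝ)) (f := fun u => η u (f u)) (μ := volume) (n := n)
        (fun k hk => hFint _ (hgrid k (le_of_lt hk)) _ (hgrid (k+1) hk))
      push_cast at h
      rw [zero_div, div_self hn0.ne'] at h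
      exact h
    have hdiff : (∑ j ∈ Finset.range n,
          ∫ u in ((j:ℝ)/(n:ℝ))..(((j:ℝ)+1)/(n:ℝ)), η ((j:ℝ)/(n:ℝ)) (f u))
        - (∫ t in (0:ℝ)..1, η t (f t))
        = ∑ j ∈ Finset.range n, ∫ u in ((j:ℝ)/(n:ℝ))..(((j:ℝ)+1)/(n:ℝ)),
            (η ((j:ℝ)/(n:ℝ)) (f u) - η u (f u)) := by
      rw [← hsum_eq, ← Finset.sum_sub_distrib]
      refine Finset.sum_congr rfl (fun j hj => ?_)
      rw [Finset.mem_range] at hj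
      have ha := hgrid j (le_of_lt hj)
      have hb : (((j:ℝ)+1)/(n:ℝ)) ∈ Icc (0:ℝ) 1 := by
        have : ((j:ℝ)+1) = ((j+1:ℕ):ℝ) := by push_cast; ring
        rw [this]; exact hgrid (j+1) hj
      rw [← intervalIntegral.integral_sub
        (hIIcomp (η ((j:ℝ)/(n:ℝ))) (hslice _ ha) _ ha _ hb) (hFint _ ha _ hb)]
    have hbd : ∀ j ∈ Finset.range n,
        |∫ u in ((j:ℝ)/(n:ℝ))..(((j:ℝ)+1)/(n:ℝ)),
          (η ((j:ℝ)/(n:ℝ)) (f u) - η u (f u))| ≤ ε/2 * (1/(n:ℝ)) := by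
      intro j hj
      rw [Finset.mem_range] at hj
      have ha := hgrid j (le_of_lt hj)
      have hb : (((j:ℝ)+1)/(n:ℝ)) ∈ Icc (0:ℝ) 1 := by
        have : ((j:ℝ)+1) = ((j+1:ℕ):ℝ) := by push_cast; ring
        rw [this]; exact hgrid (j+1) hj
      have hab : ((j:ℝ)/(n:ℝ)) ≤ (((j:ℝ)+1)/(n:ℝ)) := by gcongr; linarith
      have key : ∀ u ∈ Set.uIoc ((j:ℝ)/(n:ℝ)) (((j:ℝ)+1)/(n:ℝ)),
          ‖η ((j:ℝ)/(n:ℝ)) (f u) - η u (f u)‖ ≤ ε/2 := by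
        intro u hu
        rw [uIoc_of_le hab, mem_Ioc] at hu
        have hu01 : u ∈ Icc (0:ℝ) 1 :=
          ⟨le_trans ha.1 (le_of_lt hu.1), le_trans hu.2 hb.2⟩
        have hp : (((j:ℝ)/(n:ℝ)), f u) ∈ (Icc (0:ℝ) 1) ×ˢ (Icc (-M) M) :=
          ⟨ha, hfM u hu01⟩
        have hq : ((u : ℝ), f u) ∈ (Icc (0:ℝ) 1) ×ˢ (Icc (-M) M) :=
          ⟨hu01, hfM u hu01⟩
        have hdist : dist (((j:ℝ)/(n:ℝ)), f u) ((u : ℝ), f u) < δ := by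
          rw [Prod.dist_eq]
          simp only [dist_self]
          rw [max_eq_left dist_nonneg, Real.dist_eq]
          have h1n : ((j:ℝ)/(n:ℝ)) + 1/(n:ℝ) = (((j:ℝ)+1)/(n:ℝ)) := by ring
          have h2n : (0:ℝ) < 1/(n:ℝ) := by positivity
          have h1 : |((j:ℝ)/(n:ℝ)) - u| ≤ 1/(n:ℝ) := by
            rw [abs_le]
            constructor
            · linarith [hu.2]
            · linarith [hu.1]
          linarith
        have := hδ _ hp _ hq hdist
        rw [Real.dist_eq] at this
        rw [Real.norm_eq_abs]
        exact le_of_lt this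
      have := intervalIntegral.norm_integral_le_of_norm_le_const key
      rw [Real.norm_eq_abs] at this
      refine le_trans this (le_of_eq ?_)
      rw [abs_of_nonneg (by linarith : (0:ℝ) ≤ ((j:ℝ)+1)/(n:ℝ) - (j:ℝ)/(n:ℝ))]
      ring
    rw [Real.dist_eq, hdiff]
    calc |∑ j ∈ Finset.range n, ∫ u in ((j:ℝ)/(n:ℝ))..(((j:ℝ)+1)/(n:ℝ)),
          (η ((j:ℝ)/(n:ℝ)) (f u) - η u (f u))|
        ≤ ∑ j ∈ Finset.range n, |∫ u in ((j:ℝ)/(n:ℝ))..(((j:ℝ)+1)/(n:ℝ)),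
          (η ((j:ℝ)/(n:ℝ)) (f u) - η u (f u))| := Finset.abs_sum_le_sum_abs _ _
      _ ≤ ∑ _j ∈ Finset.range n, ε/2 * (1/(n:ℝ)) := Finset.sum_le_sum hbd
      _ = ε/2 := by
          rw [Finset.sum_const, Finset.card_range, nsmul_eq_mul]
          field_simp [hn0.ne']
      _ < ε := half_lt_self hε
  have hclaimC : Filter.Tendsto (fun n : ℕ => ∑ j ∈ Finset.range n,
        ∫ y : ℝ, (η (((j:ℝ)+1)/(n:ℝ)) y - η ((j:ℝ)/(n:ℝ)) y)^2)
      Filter.atTop (nhds 0) := by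
    have h01 : (0:ℝ) ∈ Icc (0:ℝ) 1 := ⟨le_refl 0, zero_le_one⟩
    have h11 : (1:ℝ) ∈ Icc (0:ℝ) 1 := ⟨zero_le_one, le_refl 1⟩
    set A : ℝ := ∫ y : ℝ, η 1 y with hAdef
    have hA0 : 0 ≤ A := integral_nonneg (hηnonneg 1 h11)
    have hK : IsCompact ((Icc (0:ℝ) 1) ×ˢ (Icc (-C) C)) := isCompact_Icc.prod isCompact_Icc
    have hUC := hK.uniformContinuousOn_of_continuous
      (hη.mono (fun p hp => ⟨hp.1, mem_univ _⟩))
    rw [Metric.tendsto_atTop]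
    intro ε hε
    have hε'pos : 0 < ε / (A + 1) := by positivity
    obtain ⟨δ, hδpos, hδ⟩ := Metric.uniformContinuousOn_iff.mp hUC (ε/(A+1)) hε'pos
    obtain ⟨N, hN⟩ := exists_nat_gt (1/δ)
    refine ⟨max N 1, fun n hn => ?_⟩
    have hn1 : 1 ≤ n := le_trans (le_max_right N 1) hn
    have hn0 : (0:ℝ) < (n:ℝ) := by exact_mod_cast hn1
    have hNn : (1:ℝ)/δ < (n:ℝ) :=
      lt_of_lt_of_le hN (by exact_mod_cast le_trans (le_max_left N 1) hn)
    have hinvn : (1:ℝ)/(n:ℝ) < δ := by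
      rw [div_lt_iff₀ hn0]
      rw [div_lt_iff₀ hδpos] at hNn
      linarith [mul_comm δ (n:ℝ)]
    have hgrid : ∀ j : ℕ, j ≤ n → ((j:ℝ)/(n:ℝ)) ∈ Icc (0:ℝ) 1 := by
      intro j hj
      exact ⟨by positivity, by rw [div_le_one hn0]; exact_mod_cast hj⟩
    set g1 : ℕ → ℝ := fun j => ∫ y : ℝ, η ((j:ℝ)/(n:ℝ)) y with hg1def
    have hbd : ∀ j ∈ Finset.range n,
        (∫ y : ℝ, (η (((j:ℝ)+1)/(n:ℝ)) y - η ((j:ℝ)/(n:ℝ)) y)^2)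
          ≤ ε/(A+1) * (g1 (j+1) - g1 j) := by
      intro j hj
      rw [Finset.mem_range] at hj
      have ha := hgrid j (le_of_lt hj)
      have hcast : ((j:ℝ)+1) = ((j+1:ℕ):ℝ) := by push_cast; ring
      have hb : (((j:ℝ)+1)/(n:ℝ)) ∈ Icc (0:ℝ) 1 := by rw [hcast]; exact hgrid (j+1) hj
      have hab : ((j:ℝ)/(n:ℝ)) ≤ (((j:ℝ)+1)/(n:ℝ)) := by gcongr; linarith
      have hΔnn : ∀ y : ℝ, 0 ≤ η (((j:ℝ)+1)/(n:ℝ)) y - η ((j:ℝ)/(n:ℝ)) y :=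
        fun y => sub_nonneg.mpr (hmono _ ha _ hb hab y)
      have hΔle : ∀ y : ℝ, η (((j:ℝ)+1)/(n:ℝ)) y - η ((j:ℝ)/(n:ℝ)) y ≤ ε/(A+1) := by
        intro y
        by_cases hy : y ∈ Icc (-C) C
        · have hp : ((((j:ℝ)+1)/(n:ℝ)), y) ∈ (Icc (0:ℝ) 1) ×ˢ (Icc (-C) C) := ⟨hb, hy⟩
          have hq : (((j:ℝ)/(n:ℝ)), y) ∈ (Icc (0:ℝ) 1) ×ˢ (Icc (-C) C) := ⟨ha, hy⟩
          have hdist : dist ((((j:ℝ)+1)/(n:ℝ)), y) (((j:ℝ)/(n:ℝ)), y) < δ := by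
            rw [Prod.dist_eq]
            simp only [dist_self]
            rw [max_eq_left dist_nonneg, Real.dist_eq]
            have : (((j:ℝ)+1)/(n:ℝ)) - ((j:ℝ)/(n:ℝ)) = 1/(n:ℝ) := by ring
            rw [this, abs_of_pos (by positivity)]
            exact hinvn
          have := hδ _ hp _ hq hdist
          rw [Real.dist_eq] at this
          exact le_of_abs_le (le_of_lt this)
        · have hCy : C ≤ |y| := by
            rw [mem_Icc, not_and_or, not_le, not_le] at hy
            rcases hy with h | h
            · rw [abs_of_neg (by linarith)]; linarith
            · rw [abs_of_pos (by linarith)]; linarith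
          rw [hCsupp _ ha y hCy, hCsupp _ hb y hCy]
          simp only [sub_zero]
          positivity
      have hΔc : Continuous (fun y => η (((j:ℝ)+1)/(n:ℝ)) y - η ((j:ℝ)/(n:ℝ)) y) :=
        (hslice _ hb).sub (hslice _ ha)
      have hΔCS : HasCompactSupport (fun y => η (((j:ℝ)+1)/(n:ℝ)) y - η ((j:ℝ)/(n:ℝ)) y) :=
        hCSfun _ (fun y hy => by rw [hCsupp _ hb y hy, hCsupp _ ha y hy, sub_zero])
      have hint1 : Integrable (fun y => (η (((j:ℝ)+1)/(n:ℝ)) y - η ((j:ℝ)/(n:ℝ)) y)^2) :=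
        (hΔc.pow 2).integrable_of_hasCompactSupport
          (hCSfun _ (fun y hy => by simp only [Pi.pow_apply]; rw [hCsupp _ hb y hy, hCsupp _ ha y hy]; ring))
      have hint2 : Integrable (fun y => ε/(A+1) * (η (((j:ℝ)+1)/(n:ℝ)) y - η ((j:ℝ)/(n:ℝ)) y)) :=
        (hΔc.integrable_of_hasCompactSupport hΔCS).const_mul _
      have hle : (∫ y : ℝ, (η (((j:ℝ)+1)/(n:ℝ)) y - η ((j:ℝ)/(n:ℝ)) y)^2)
          ≤ ∫ y : ℝ, ε/(A+1) * (η (((j:ℝ)+1)/(n:ℝ)) y - η ((j:ℝ)/(n:ℝ)) y) := by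
        refine integral_mono hint1 hint2 (fun y => ?_)
        have h1 := hΔnn y
        have h2 := hΔle y
        nlinarith
      refine le_trans hle (le_of_eq ?_)
      rw [MeasureTheory.integral_const_mul]
      congr 1
      simp only [hg1def, ← hcast]
      rw [← MeasureTheory.integral_sub (hInt _ hb) (hInt _ ha)]
    have hDnn : 0 ≤ ∑ j ∈ Finset.range n,
        ∫ y : ℝ, (η (((j:ℝ)+1)/(n:ℝ)) y - η ((j:ℝ)/(n:ℝ)) y)^2 :=
      Finset.sum_nonneg (fun j _ => integral_nonneg (fun y => sq_nonneg _))
    have hsum : ∑ j ∈ Finset.range n, (ε/(A+1)) * (g1 (j+1) - g1 j)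
        = (ε/(A+1)) * (g1 n - g1 0) := by
      rw [← Finset.mul_sum, Finset.sum_range_sub g1 n]
    have hg1n : g1 n = A := by
      simp only [hg1def, hAdef, div_self hn0.ne']
    have hg10 : 0 ≤ g1 0 := by
      simp only [hg1def, Nat.cast_zero, zero_div]
      exact integral_nonneg (hηnonneg 0 h01)
    have hfinal : ∑ j ∈ Finset.range n,
        (∫ y : ℝ, (η (((j:ℝ)+1)/(n:ℝ)) y - η ((j:ℝ)/(n:ℝ)) y)^2) ≤ ε/(A+1) * A := by
      refine le_trans (Finset.sum_le_sum hbd) ?_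
      rw [hsum, hg1n]
      have : ε/(A+1) * (A - g1 0) ≤ ε/(A+1) * A := by
        apply mul_le_mul_of_nonneg_left _ (le_of_lt hε'pos)
        linarith
      exact this
    rw [Real.dist_eq, sub_zero, abs_of_nonneg hDnn]
    refine lt_of_le_of_lt hfinal ?_
    rw [div_mul_eq_mul_div, div_lt_iff₀ (by linarith : (0:ℝ) < A + 1)]
    nlinarith
  have h2I : (∫ y : ℝ, (η 1 y)^2) = 2 * ∫ t in (0:ℝ)..1, η t (f t) := by
    have t1 : Filter.Tendsto (fun n : ℕ =>
        2 * (∑ j ∈ Finset.range n, ∫ u in ((j:ℝ)/(n:ℝ))..(((j:ℝ)+1)/(n:ℝ)), η ((j:ℝ)/(n:ℝ)) (f u))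
        + ∑ j ∈ Finset.range n, ∫ y : ℝ, (η (((j:ℝ)+1)/(n:ℝ)) y - η ((j:ℝ)/(n:ℝ)) y)^2)
        Filter.atTop (nhds (2 * (∫ t in (0:ℝ)..1, η t (f t)) + 0)) :=
      (hclaimB.const_mul 2).add hclaimC
    have t2 : Filter.Tendsto (fun n : ℕ =>
        2 * (∑ j ∈ Finset.range n, ∫ u in ((j:ℝ)/(n:ℝ))..(((j:ℝ)+1)/(n:ℝ)), η ((j:ℝ)/(n:ℝ)) (f u))
        + ∑ j ∈ Finset.range n, ∫ y : ℝ, (η (((j:ℝ)+1)/(n:ℝ)) y - η ((j:ℝ)/(n:ℝ)) y)^2)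
        Filter.atTop (nhds (∫ y : ℝ, (η 1 y)^2)) := by
      refine Filter.Tendsto.congr' ?_ tendsto_const_nhds
      filter_upwards [Filter.eventually_ge_atTop 1] with n hn
      exact hclaimA n hn
    have := tendsto_nhds_unique t2 t1
    linarith
  have hK1 : ∫ t in (0:ℝ)..1, η 1 (f t) = ∫ y : ℝ, (η 1 y)^2 := by
    have h := hoccC (η 1) (hslice 1 h11) (hCSfun _ (hCsupp 1 h11)) 1 h11
    rw [h]
    congr 1; funext y; rw [pow_two]
  have hFc : ContinuousOn (fun u => η u (f u)) (Icc (0:ℝ) 1) :=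
    hη.comp (f := fun u => (u, f u)) (s := Icc (0:ℝ) 1) (continuousOn_id.prodMk hf) (fun u hu => ⟨hu, mem_univ _⟩)
  have hFint : IntervalIntegrable (fun u => η u (f u)) volume 0 1 :=
    (hFc.mono (uIcc_subset_Icc h01 h11)).intervalIntegrable
  have hsub : ∫ t in (0:ℝ)..1, (η 1 (f t) - η t (f t))
      = (∫ t in (0:ℝ)..1, η 1 (f t)) - ∫ t in (0:ℝ)..1, η t (f t) :=
    intervalIntegral.integral_sub (hIIcomp (η 1) (hslice 1 h11) 0 h01 1 h11) hFint
  rw [hsub, hK1]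
  linarith
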